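/- Let P be positive semidefinite with positive eigenvalues a₁,…,a_r (counted with multiplicity, r < n). Then P has a companion if and only if there exist an orthonormal set {v₁,…,v_r} of eigenvectors of P for a₁,…,a_r and an orthonormal set {v_{r+1},…,v_n} spanning ker P, and scalars x_j ≥ 0, such that Σ_{i=1}^r a_i (v_i ∘ v̄_i) = Σ_{j=r+1}^n x_j (v_j ∘ v̄_j). -/

import Mathlib

open scoped ComplexOrder

noncomputable def opNorm {n : Type*} [Fintype n] [DecidableEq n] (M : Matrix n n ℂ) : ℝ :=
  ‖(Matrix.toEuclideanCLM (𝕜 := ℂ) M : EuclideanSpace ℂ n →L[ℂ] EuclideanSpace ℂ n)‖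

/-- `M` is minimal: its operator norm is ≤ that of `M + D` for every real diagonal `D`. -/
def IsMinimal {n : Type*} [Fintype n] [DecidableEq n] (M : Matrix n n ℂ) : Prop :=
  ∀ d : n → ℝ, opNorm M ≤ opNorm (M + Matrix.diagonal fun i => (d i : ℂ))

/-- The family `v` is orthonormal for the standard inner product of `ℂⁿ`. -/
def ONFamily {ι : Type*} [DecidableEq ι] {n : Type*} [Fintype n]
    (v : ι → (n → ℂ)) : Prop :=
  ∀ i j, dotProduct (star (v i)) (v j) = if i = j then (1 : ℂ) else 0

namespace Stmt10Aux

open Matrix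

variable {n : ℕ}

lemma vecMulVec_mulVec' (a b x : Fin n → ℂ) :
    (vecMulVec a b) *ᵥ x = (b ⬝ᵥ x) • a := by
  ext i
  simp [vecMulVec, mulVec, dotProduct, Finset.mul_sum, mul_comm, mul_assoc, mul_left_comm]

lemma sum_mulVec' {ι : Type*} (s : Finset ι) (M : ι → Matrix (Fin n) (Fin n) ℂ) (x : Fin n → ℂ) :
    (∑ i ∈ s, M i) *ᵥ x = ∑ i ∈ s, (M i) *ᵥ x := by
  ext p
  simp only [mulVec, dotProduct, Matrix.sum_apply, Finset.sum_mul, Finset.sum_apply]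
  rw [Finset.sum_comm]

lemma dp_star_comm (x y : Fin n → ℂ) : star x ⬝ᵥ y = star (star y ⬝ᵥ x) := by
  simp [dotProduct, star_sum, mul_comm]

lemma eq_of_onb {A B : Matrix (Fin n) (Fin n) ℂ} {w : Fin n → Fin n → ℂ}
    (hw : ONFamily w) (h : ∀ k, A *ᵥ w k = B *ᵥ w k) : A = B := by
  set W : Matrix (Fin n) (Fin n) ℂ := Matrix.of (fun p k => w k p) with hW
  have hWu : Wᴴ * W = 1 := by
    ext i j
    simp only [Matrix.mul_apply, conjTranspose_apply, Matrix.one_apply, hW, Matrix.of_apply]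
    simpa [dotProduct] using hw i j
  have hWu' : W * Wᴴ = 1 := mul_eq_one_comm.mp hWu
  have hAW : A * W = B * W := by
    ext p m
    have := congrFun (h m) p
    simpa [Matrix.mul_apply, mulVec, dotProduct, hW] using this
  calc A = A * (W * Wᴴ) := by rw [hWu', Matrix.mul_one]
    _ = (A * W) * Wᴴ := by rw [Matrix.mul_assoc]
    _ = (B * W) * Wᴴ := by rw [hAW]
    _ = B * (W * Wᴴ) := by rw [Matrix.mul_assoc]
    _ = B := by rw [hWu', Matrix.mul_one]

lemma spec_mulVec (c : Fin n → ℝ) (u : Fin n → Fin n → ℂ) (hu : ONFamily u) (j : Fin n) :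
    (∑ i, (c i : ℂ) • vecMulVec (u i) (star (u i))) *ᵥ u j = (c j : ℂ) • u j := by
  rw [sum_mulVec']
  have : ∀ i, ((c i : ℂ) • vecMulVec (u i) (star (u i))) *ᵥ u j
      = (if i = j then (c i : ℂ) else 0) • u i := by
    intro i
    rw [Matrix.smul_mulVec, vecMulVec_mulVec', hu i j]
    by_cases h : i = j <;> simp [h, smul_smul]
  rw [Finset.sum_congr rfl fun i _ => this i]
  simp

lemma spec_diag (c : Fin n → ℝ) (u : Fin n → Fin n → ℂ) (k : Fin n) :
    (∑ i, (c i : ℂ) • vecMulVec (u i) (star (u i))) k k = ((∑ i, c i * ‖u i k‖ ^ 2 : ℝ) : ℂ) := by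
  push_cast
  rw [Matrix.sum_apply]
  congr 1
  ext i
  simp only [Matrix.smul_apply, vecMulVec_apply, Pi.star_apply, smul_eq_mul]
  rw [mul_comm (u i k), Complex.star_def, Complex.conj_mul']

lemma spec_herm (c : Fin n → ℝ) (u : Fin n → Fin n → ℂ) :
    (∑ i, (c i : ℂ) • vecMulVec (u i) (star (u i))).IsHermitian := by
  apply Matrix.IsHermitian.ext
  intro i j
  simp [Matrix.sum_apply, vecMulVec_apply, star_sum, mul_comm, mul_left_comm, mul_assoc]

lemma spec_psd (c : Fin n → ℝ) (hc : ∀ i, 0 ≤ c i) (u : Fin n → Fin n → ℂ) :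
    (∑ i, (c i : ℂ) • vecMulVec (u i) (star (u i))).PosSemidef := by
  refine Matrix.PosSemidef.of_dotProduct_mulVec_nonneg (spec_herm c u) fun y => ?_
  rw [sum_mulVec']
  have dps : star y ⬝ᵥ (∑ i, ((c i : ℂ) • vecMulVec (u i) (star (u i))) *ᵥ y)
      = ∑ i, star y ⬝ᵥ (((c i : ℂ) • vecMulVec (u i) (star (u i))) *ᵥ y) := by
    simp only [dotProduct, Finset.sum_apply, Finset.mul_sum]
    exact Finset.sum_comm
  rw [dps]
  apply Finset.sum_nonneg
  intro i _
  rw [Matrix.smul_mulVec, vecMulVec_mulVec', dotProduct_smul, dotProduct_smul,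
    smul_eq_mul, smul_eq_mul, dp_star_comm y (u i)]
  set z := star (u i) ⬝ᵥ y
  have : (c i : ℂ) * (z * star z) = ((c i * ‖z‖^2 : ℝ) : ℂ) := by
    push_cast
    rw [Complex.star_def, Complex.mul_conj']
  rw [this]
  rw [Complex.zero_le_real]
  exact mul_nonneg (hc i) (sq_nonneg _)

lemma on_card_le {ι : Type*} [Fintype ι] [DecidableEq ι] (f : ι → Fin n → ℂ)
    (hf : ONFamily f) : Fintype.card ι ≤ n := by
  let g : ι → EuclideanSpace ℂ (Fin n) := fun i => WithLp.toLp 2 (f i)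
  have horth : Orthonormal ℂ g := by
    rw [orthonormal_iff_ite]
    intro i j
    rw [EuclideanSpace.inner_eq_star_dotProduct, dotProduct_comm]
    simpa using hf i j
  have := horth.linearIndependent.fintype_card_le_finrank
  simpa [finrank_euclideanSpace] using this

lemma eig_split {A B : Matrix (Fin n) (Fin n) ℂ} (hA : A.PosSemidef)
    (hAB : A * B = 0) {x : Fin n → ℂ} {t : ℝ}
    (hx : (A - B) *ᵥ x = (t : ℂ) • x) (ht : t ≤ 0) :
    A *ᵥ x = 0 ∧ B *ᵥ x = ((-t : ℝ) : ℂ) • x := by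
  have hAy : A *ᵥ (A *ᵥ x) = (t : ℂ) • (A *ᵥ x) := by
    have h1 : A *ᵥ ((A - B) *ᵥ x) = A *ᵥ (A *ᵥ x) := by
      rw [Matrix.mulVec_mulVec, Matrix.mulVec_mulVec, Matrix.mul_sub, hAB, sub_zero]
    rw [hx, Matrix.mulVec_smul] at h1
    exact h1.symm
  have hy0 : A *ᵥ x = 0 := by
    have key : star (A *ᵥ x) ⬝ᵥ (A *ᵥ x) = (t : ℂ) * (star x ⬝ᵥ (A *ᵥ x)) := by
      calc star (A *ᵥ x) ⬝ᵥ (A *ᵥ x) = (star x ᵥ* Aᴴ) ⬝ᵥ (A *ᵥ x) := by rw [Matrix.star_mulVec]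
        _ = (star x ᵥ* A) ⬝ᵥ (A *ᵥ x) := by rw [hA.1]
        _ = star x ⬝ᵥ (A *ᵥ (A *ᵥ x)) := (Matrix.dotProduct_mulVec _ _ _).symm
        _ = star x ⬝ᵥ ((t : ℂ) • (A *ᵥ x)) := by rw [hAy]
        _ = (t : ℂ) * (star x ⬝ᵥ (A *ᵥ x)) := by rw [dotProduct_smul, smul_eq_mul]
    have hle : star (A *ᵥ x) ⬝ᵥ (A *ᵥ x) ≤ 0 := by
      rw [key]
      have h1 : ((t : ℂ)) ≤ 0 := by
        rw [show ((0:ℂ)) = ((0:ℝ):ℂ) by norm_num, Complex.real_le_real]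
        exact ht
      exact mul_nonpos_of_nonpos_of_nonneg h1 (hA.dotProduct_mulVec_nonneg x)
    have hge := dotProduct_star_self_nonneg (A *ᵥ x)
    exact dotProduct_star_self_eq_zero.mp (le_antisymm hle hge)
  refine ⟨hy0, ?_⟩
  have h2 := hx
  rw [Matrix.sub_mulVec, hy0, zero_sub] at h2
  have h3 : B *ᵥ x = -((t:ℂ) • x) := by rw [← h2, neg_neg]
  rw [h3]
  push_cast
  rw [neg_smul]

end Stmt10Aux

open Matrix Stmt10Aux

theorem stmt10 (n r : ℕ) (hr : 0 < r) (hrn : r < n)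
    (P : Matrix (Fin n) (Fin n) ℂ) (a : Fin n → ℝ)
    (hapos : ∀ i : Fin n, (i : ℕ) < r → 0 < a i)
    (ha0 : ∀ i : Fin n, r ≤ (i : ℕ) → a i = 0)
    (u : Fin n → (Fin n → ℂ)) (hu : ONFamily u)
    (hP : P = ∑ i, (a i : ℂ) • Matrix.vecMulVec (u i) (star (u i))) :
    (∃ Q : Matrix (Fin n) (Fin n) ℂ, Q.PosSemidef ∧ P * Q = 0 ∧ ∀ i, P i i = Q i i) ↔
    (∃ v : Fin n → (Fin n → ℂ), ONFamily v ∧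
      (∀ i, P.mulVec (v i) = (a i : ℂ) • v i) ∧
      ∃ x : Fin n → ℝ, (∀ j, 0 ≤ x j) ∧ (∀ j : Fin n, (j : ℕ) < r → x j = 0) ∧
        ∀ k, ∑ i, a i * ‖v i k‖ ^ 2 = ∑ j, x j * ‖v j k‖ ^ 2) := by
  classical
  have hanneg : ∀ i, 0 ≤ a i := fun i => by
    by_cases h : (i:ℕ) < r
    · exact (hapos i h).le
    · exact le_of_eq (ha0 i (le_of_not_gt h)).symm
  have hPpsd : P.PosSemidef := by rw [hP]; exact spec_psd a hanneg u
  have hPu : ∀ i, P *ᵥ u i = ((a i : ℝ) : ℂ) • u i := by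
    intro i; rw [hP]; exact spec_mulVec a u hu i
  have horth : ∀ (y z : Fin n → ℂ) (α : ℝ), α ≠ 0 → P *ᵥ y = (α:ℂ) • y → P *ᵥ z = 0 →
      star y ⬝ᵥ z = 0 := by
    intro y z α hα hy hz
    have h2 : ((α:ℂ)) * (star y ⬝ᵥ z) = 0 := by
      calc (α:ℂ) * (star y ⬝ᵥ z) = star ((α:ℂ) • y) ⬝ᵥ z := by
            simp [star_smul, Complex.star_def, Complex.conj_ofReal, smul_dotProduct]
        _ = star (P *ᵥ y) ⬝ᵥ z := by rw [hy]
        _ = (star y ᵥ* Pᴴ) ⬝ᵥ z := by rw [Matrix.star_mulVec]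
        _ = star y ⬝ᵥ (Pᴴ *ᵥ z) := (Matrix.dotProduct_mulVec _ _ _).symm
        _ = star y ⬝ᵥ (P *ᵥ z) := by rw [hPpsd.1.eq]
        _ = 0 := by rw [hz, dotProduct_zero]
    have hα' : ((α:ℂ)) ≠ 0 := by exact_mod_cast hα
    exact (mul_eq_zero.mp h2).resolve_left hα'
  constructor
  · -- forward direction
    rintro ⟨Q, hQpsd, hPQ, hdiag⟩
    have hQP : Q * P = 0 := by
      have hct := congrArg Matrix.conjTranspose hPQ
      rwa [Matrix.conjTranspose_mul, hQpsd.1.eq, hPpsd.1.eq, Matrix.conjTranspose_zero] at hct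
    have hM : (P - Q).IsHermitian := hPpsd.1.sub hQpsd.1
    set w : Fin n → Fin n → ℂ := fun k => ⇑(hM.eigenvectorBasis k) with hw
    set μ : Fin n → ℝ := hM.eigenvalues with hμ
    have hwON : ONFamily w := by
      intro i j
      have hON := hM.eigenvectorBasis.orthonormal
      rw [orthonormal_iff_ite] at hON
      have h2 := hON i j
      rw [EuclideanSpace.inner_eq_star_dotProduct, dotProduct_comm] at h2
      simpa using h2
    have hMw : ∀ k, (P - Q) *ᵥ w k = ((μ k : ℝ) : ℂ) • w k := by
      intro k
      have h1 := hM.mulVec_eigenvectorBasis k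
      ext p
      have := congrFun h1 p
      simpa [hw, hμ, Complex.real_smul] using this
    have hsplitneg : ∀ k, μ k ≤ 0 → P *ᵥ w k = 0 ∧ Q *ᵥ w k = ((-μ k : ℝ):ℂ) • w k :=
      fun k h => eig_split hPpsd hPQ (hMw k) h
    have hsplitpos : ∀ k, 0 < μ k → Q *ᵥ w k = 0 ∧ P *ᵥ w k = ((μ k : ℝ):ℂ) • w k := by
      intro k h
      have hx' : (Q - P) *ᵥ w k = ((-μ k : ℝ):ℂ) • w k := by
        rw [← neg_sub P Q, Matrix.neg_mulVec, hMw k]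
        push_cast
        rw [neg_smul]
      obtain ⟨h1, h2⟩ := eig_split hQpsd hQP hx' (by linarith)
      refine ⟨h1, ?_⟩
      rw [h2]
      norm_num
    set T : Finset (Fin n) := Finset.univ.filter (fun k => ¬ 0 < μ k) with hT
    set S : Finset (Fin n) := Finset.univ.filter (fun k => 0 < μ k) with hS
    have hmemT : ∀ k, k ∈ T → μ k ≤ 0 := by
      intro k hk
      rw [hT, Finset.mem_filter] at hk
      exact not_lt.mp hk.2
    have hmemS : ∀ k, k ∈ S → 0 < μ k := by
      intro k hk
      rw [hS, Finset.mem_filter] at hk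
      exact hk.2
    -- cardinality bounds
    have hcard1 : r + T.card ≤ n := by
      have hON : ONFamily (Sum.elim (fun i : Fin r => u (Fin.castLE hrn.le i))
          (fun t : {k // k ∈ T} => w t.1)) := by
        rintro (i | s) (j | t) <;>
          simp only [Sum.elim_inl, Sum.elim_inr]
        · rw [hu]
          by_cases h : i = j
          · simp [h]
          · rw [if_neg (by simpa [Fin.castLE] using fun hh => h (Fin.ext hh)), if_neg (by simp [h])]
        · rw [horth (u (Fin.castLE hrn.le i)) (w t.1) (a (Fin.castLE hrn.le i))
            (ne_of_gt (hapos _ (by simp))) (hPu _) ((hsplitneg t.1 (hmemT _ t.2)).1)]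
          simp
        · rw [dp_star_comm,
            horth (u (Fin.castLE hrn.le j)) (w s.1) (a (Fin.castLE hrn.le j))
              (ne_of_gt (hapos _ (by simp))) (hPu _) ((hsplitneg s.1 (hmemT _ s.2)).1)]
          simp
        · rw [hwON]
          by_cases h : s = t
          · simp [h]
          · rw [if_neg (fun hh => h (Subtype.ext hh)), if_neg (by simp [h])]
      have hle := on_card_le _ hON
      simpa [Fintype.card_sum, Fintype.card_coe] using hle
    have hcard2 : (n - r) + S.card ≤ n := by
      have hON : ONFamily (Sum.elim (fun m : Fin (n - r) => u ⟨r + (m:ℕ), by omega⟩)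
          (fun t : {k // k ∈ S} => w t.1)) := by
        have hu0 : ∀ m : Fin (n - r), P *ᵥ u ⟨r + (m:ℕ), by omega⟩ = 0 := by
          intro m
          rw [hPu, ha0 ⟨r + (m:ℕ), by omega⟩ (by simp)]
          simp
        rintro (i | s) (j | t) <;>
          simp only [Sum.elim_inl, Sum.elim_inr]
        · rw [hu]
          by_cases h : i = j
          · simp [h]
          · rw [if_neg (by
              intro hh
              have := congrArg Fin.val hh
              simp only at this
              exact h (Fin.ext (by omega))), if_neg (by simp [h])]
        · rw [dp_star_comm,
            horth (w t.1) (u ⟨r + (i:ℕ), by omega⟩) (μ t.1) (ne_of_gt (hmemS _ t.2))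
              ((hsplitpos t.1 (hmemS _ t.2)).2) (hu0 _)]
          simp
        · rw [horth (w s.1) (u ⟨r + (j:ℕ), by omega⟩) (μ s.1) (ne_of_gt (hmemS _ s.2))
              ((hsplitpos s.1 (hmemS _ s.2)).2) (hu0 _)]
          simp
        · rw [hwON]
          by_cases h : s = t
          · simp [h]
          · rw [if_neg (fun hh => h (Subtype.ext hh)), if_neg (by simp [h])]
      have hle := on_card_le _ hON
      simpa [Fintype.card_sum, Fintype.card_coe] using hle
    have hTS : S.card + T.card = n := by
      rw [hS, hT]
      simpa using Finset.card_filter_add_card_filter_not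
        (s := (Finset.univ : Finset (Fin n))) (p := fun k => 0 < μ k)
    have hTcard : T.card = n - r := by omega
    set oe := T.orderIsoOfFin hTcard with hoe
    have hlt : ∀ i : Fin n, ¬ (i:ℕ) < r → ((i:ℕ) - r) < n - r := fun i h => by
      have := i.isLt; omega
    set v : Fin n → Fin n → ℂ :=
      fun i => if h : (i:ℕ) < r then u i
        else w (↑(oe ⟨(i:ℕ) - r, hlt i h⟩) : Fin n) with hvdef
    set x : Fin n → ℝ :=
      fun i => if h : (i:ℕ) < r then 0
        else -μ (↑(oe ⟨(i:ℕ) - r, hlt i h⟩) : Fin n) with hxdef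
    have hv_lt : ∀ (i : Fin n) (h : (i:ℕ) < r), v i = u i := fun i h => dif_pos h
    have hv_ge : ∀ (i : Fin n) (h : ¬ (i:ℕ) < r),
        v i = w (↑(oe ⟨(i:ℕ) - r, hlt i h⟩) : Fin n) := fun i h => dif_neg h
    have hx_lt : ∀ (i : Fin n) (h : (i:ℕ) < r), x i = 0 := fun i h => dif_pos h
    have hx_ge : ∀ (i : Fin n) (h : ¬ (i:ℕ) < r),
        x i = -μ (↑(oe ⟨(i:ℕ) - r, hlt i h⟩) : Fin n) := fun i h => dif_neg h
    have hμoe : ∀ m : Fin (n - r), μ (↑(oe m) : Fin n) ≤ 0 := fun m => hmemT _ (oe m).2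
    have hPw0 : ∀ m : Fin (n - r), P *ᵥ w (↑(oe m) : Fin n) = 0 :=
      fun m => (hsplitneg _ (hμoe m)).1
    have hoeinj : ∀ (i j : Fin n) (hi : ¬ (i:ℕ) < r) (hj : ¬ (j:ℕ) < r),
        (↑(oe ⟨(i:ℕ) - r, hlt i hi⟩) : Fin n) = (↑(oe ⟨(j:ℕ) - r, hlt j hj⟩) : Fin n) → i = j := by
      intro i j hi hj hh
      have h1 := oe.injective (Subtype.ext hh)
      have h2 := congrArg Fin.val h1
      simp only at h2
      exact Fin.ext (by omega)
    refine ⟨v, ?_, ?_, x, ?_, ?_, ?_⟩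
    · -- ONFamily v
      intro i j
      by_cases hi : (i:ℕ) < r <;> by_cases hj : (j:ℕ) < r
      · rw [hv_lt i hi, hv_lt j hj]; exact hu i j
      · rw [hv_lt i hi, hv_ge j hj,
          horth (u i) _ (a i) (ne_of_gt (hapos i hi)) (hPu i) (hPw0 _)]
        rw [if_neg (by intro hh; subst hh; exact hj hi)]
      · rw [hv_ge i hi, hv_lt j hj, dp_star_comm,
          horth (u j) _ (a j) (ne_of_gt (hapos j hj)) (hPu j) (hPw0 _)]
        rw [if_neg (by intro hh; subst hh; exact hi hj)]
        simp
      · rw [hv_ge i hi, hv_ge j hj, hwON]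
        by_cases h : i = j
        · subst h; simp
        · rw [if_neg (fun hh => h (hoeinj i j hi hj hh)), if_neg h]
    · -- eigenvectors
      intro i
      by_cases h : (i:ℕ) < r
      · rw [hv_lt i h]; exact hPu i
      · rw [hv_ge i h, hPw0 _, ha0 i (le_of_not_gt h)]
        simp
    · -- x nonneg
      intro j
      by_cases h : (j:ℕ) < r
      · rw [hx_lt j h]
      · rw [hx_ge j h]
        have := hμoe ⟨(j:ℕ) - r, hlt j h⟩
        linarith
    · exact fun j h => hx_lt j h
    · -- the sum identity
      intro k
      set ν : Fin n → ℝ := fun κ => if 0 < μ κ then 0 else -μ κ with hν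
      have hQw' : ∀ m, Q *ᵥ w m = ((ν m : ℝ):ℂ) • w m := by
        intro m
        by_cases hm : 0 < μ m
        · rw [(hsplitpos m hm).1, hν]; simp [hm]
        · rw [(hsplitneg m (not_lt.mp hm)).2, hν]; simp [hm]
      have hQspec : Q = ∑ κ, (ν κ : ℂ) • vecMulVec (w κ) (star (w κ)) := by
        apply eq_of_onb hwON
        intro m
        rw [spec_mulVec ν w hwON m, hQw' m]
      have hPkk : P k k = ((∑ i, a i * ‖u i k‖^2 : ℝ):ℂ) := by
        rw [hP]; exact spec_diag a u k
      have hQkk : Q k k = ((∑ κ, ν κ * ‖w κ k‖^2 : ℝ):ℂ) := by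
        rw [hQspec]; exact spec_diag ν w k
      have hreal : ∑ i, a i * ‖u i k‖^2 = ∑ κ, ν κ * ‖w κ k‖^2 := by
        have hd := hdiag k
        rw [hPkk, hQkk] at hd
        exact_mod_cast hd
      have hL : ∑ i, a i * ‖v i k‖^2 = ∑ i, a i * ‖u i k‖^2 := by
        apply Finset.sum_congr rfl
        intro i _
        by_cases h : (i:ℕ) < r
        · rw [hv_lt i h]
        · rw [ha0 i (le_of_not_gt h)]; ring
      have hn' : r + (n - r) = n := by omega
      set e : Fin r ⊕ Fin (n - r) ≃ Fin n := finSumFinEquiv.trans (finCongr hn') with he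
      have heL : ∀ i : Fin r, ((e (Sum.inl i) : Fin n) : ℕ) = (i:ℕ) := by
        intro i; simp [he]
      have heR : ∀ m : Fin (n - r), ((e (Sum.inr m) : Fin n) : ℕ) = r + (m:ℕ) := by
        intro m; simp [he]
      have hR : ∑ j, x j * ‖v j k‖^2
          = ∑ m : Fin (n - r), (-μ (↑(oe m) : Fin n)) * ‖w (↑(oe m) : Fin n) k‖^2 := by
        rw [← Equiv.sum_comp e (fun j => x j * ‖v j k‖^2), Fintype.sum_sum_type]
        have h0 : ∑ i : Fin r, x (e (Sum.inl i)) * ‖v (e (Sum.inl i)) k‖^2 = 0 := by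
          apply Finset.sum_eq_zero
          intro i _
          rw [hx_lt _ (by rw [heL]; exact i.isLt)]
          ring
        rw [h0, zero_add]
        apply Finset.sum_congr rfl
        intro m _
        have hge : ¬ ((e (Sum.inr m) : Fin n) : ℕ) < r := by rw [heR]; omega
        have hidx : (⟨((e (Sum.inr m) : Fin n) : ℕ) - r, hlt _ hge⟩ : Fin (n - r)) = m := by
          apply Fin.ext
          simp [heR m]
        rw [hx_ge _ hge, hv_ge _ hge, hidx]
      have hV : ∑ κ, ν κ * ‖w κ k‖^2
          = ∑ m : Fin (n - r), (-μ (↑(oe m) : Fin n)) * ‖w (↑(oe m) : Fin n) k‖^2 := by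
        have h1 : ∑ κ ∈ T, (-μ κ) * ‖w κ k‖^2 = ∑ κ, ν κ * ‖w κ k‖^2 := by
          rw [hT, Finset.sum_filter]
          apply Finset.sum_congr rfl
          intro κ _
          by_cases h : 0 < μ κ <;> simp [hν, h]
        rw [← h1, ← Finset.sum_coe_sort T (fun κ => (-μ κ) * ‖w κ k‖^2),
          ← Equiv.sum_comp oe.toEquiv
            (fun t : {k' // k' ∈ T} => (-μ (t : Fin n)) * ‖w (t : Fin n) k‖^2)]
        rfl
      rw [hL, hreal, hV, hR]
  · -- backward direction
    rintro ⟨v, hv, heig, x, hx0, hxr, hsum⟩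
    refine ⟨∑ j, (x j : ℂ) • vecMulVec (v j) (star (v j)), spec_psd x hx0 v, ?_, ?_⟩
    · rw [Finset.mul_sum]
      apply Finset.sum_eq_zero
      intro j _
      rw [Matrix.mul_smul]
      have hmul : P * vecMulVec (v j) (star (v j)) = vecMulVec (P *ᵥ v j) (star (v j)) := by
        ext p q
        simp [Matrix.mul_apply, vecMulVec_apply, mulVec, dotProduct, Finset.sum_mul, mul_assoc]
      rw [hmul, heig j]
      have hsmul : vecMulVec (((a j : ℝ):ℂ) • v j) (star (v j))
          = ((a j : ℝ):ℂ) • vecMulVec (v j) (star (v j)) := by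
        ext p q
        simp [vecMulVec_apply, mul_assoc]
      rw [hsmul, smul_smul]
      by_cases h : (j:ℕ) < r
      · rw [hxr j h]; simp
      · rw [ha0 j (le_of_not_gt h)]; simp
    · intro k
      have hPspec : P = ∑ i, (a i : ℂ) • vecMulVec (v i) (star (v i)) := by
        apply eq_of_onb hv
        intro m
        rw [heig m, spec_mulVec a v hv m]
      rw [hPspec, spec_diag a v k, spec_diag x v k]
      exact_mod_cast congrArg Complex.ofReal (hsum k)
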